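/- arXiv:1403.4557 — 2 statements merged into one kernel-verified Lean document; each statement's English description precedes it below -/
import Mathlib

section
/- Assume n ≥ 2. The relation ∼ is symmetric: for all v_1, v_2 ∈ R, if v_1 ∼ v_2 then v_2 ∼ v_1. -/
abbrev Pt (p n : ℕ) := Fin n → ZMod p

/-- The left regular representation `R_L` of `(ℤ/pℤ)^n` inside `Sym(R)`: all translations. -/
def RL (p n : ℕ) : Subgroup (Equiv.Perm (Pt p n)) where
  carrier := {σ | ∃ r : Pt p n, ∀ x, σ x = r + x}
  one_mem' := ⟨0, fun x => by simp⟩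
  mul_mem' := by
    rintro a b ⟨r, hr⟩ ⟨s, hs⟩
    refine ⟨r + s, fun x => ?_⟩
    simp [Equiv.Perm.mul_apply, hr, hs, add_assoc]
  inv_mem' := by
    rintro a ⟨r, hr⟩
    refine ⟨-r, fun x => ?_⟩
    have h := hr (a⁻¹ x)
    rw [← Equiv.Perm.mul_apply, mul_inv_cancel, Equiv.Perm.one_apply] at h
    have h2 : -r + x = a⁻¹ x := by
      conv_lhs => rw [h]
      abel
    exact h2.symm

/-- The conjugate `π⁻¹ R_L π` of the left regular representation. -/
def RLpi (p n : ℕ) (π : Equiv.Perm (Pt p n)) : Subgroup (Equiv.Perm (Pt p n)) where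
  carrier := {σ | ∃ ρ ∈ RL p n, σ = π⁻¹ * ρ * π}
  one_mem' := ⟨1, one_mem _, by group⟩
  mul_mem' := by
    rintro a b ⟨r, hr, rfl⟩ ⟨s, hs, rfl⟩
    exact ⟨r * s, mul_mem hr hs, by group⟩
  inv_mem' := by
    rintro a ⟨r, hr, rfl⟩
    exact ⟨r⁻¹, inv_mem hr, by group⟩

/-- `σ` belongs to the 2-closure `G^{(2)}` of `G`. -/
def twoClosed {α : Type*} (G : Subgroup (Equiv.Perm α)) (σ : Equiv.Perm α) : Prop :=
  ∀ x y : α, ∃ g ∈ G, σ x = g x ∧ σ y = g y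

/-- The relation `∼`: `v₁ ∼ v₂` iff `C_{v₂}` is not contained in a single orbit
of the stabilizer `G_{v₁}`. -/
def simRel (p n : ℕ) (G : Subgroup (Equiv.Perm (Pt p n)))
    (Cb : Pt p n → Set (Pt p n)) (v₁ v₂ : Pt p n) : Prop :=
  ¬ ∀ x ∈ Cb v₂, ∃ g ∈ G, g v₁ = v₁ ∧ g v₂ = x

/-- The relation `∼` is symmetric. -/
theorem stmt_13 (p n : ℕ) (hp : p.Prime) (hn : 2 ≤ n)
    (π : Equiv.Perm (Pt p n))
    (G : Subgroup (Equiv.Perm (Pt p n))) (hG : G = RL p n ⊔ RLpi p n π)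
    (hpG : IsPGroup p ↑G)
    (B : ℕ → Set (Set (Pt p n)))
    (hBpart : ∀ i ≤ n, Setoid.IsPartition (B i))
    (hBsize : ∀ i ≤ n, ∀ b ∈ B i, Nat.card b = p ^ i)
    (hBinv : ∀ i ≤ n, ∀ g ∈ G, ∀ b ∈ B i, ⇑g '' b ∈ B i)
    (hBref : ∀ i < n, ∀ b ∈ B i, ∃ c ∈ B (i + 1), b ⊆ c)
    (Cb : Pt p n → Set (Pt p n)) (hCb : ∀ w, Cb w ∈ B 2 ∧ w ∈ Cb w)
    (v₁ v₂ : Pt p n) (h : simRel p n G Cb v₁ v₂) :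
    simRel p n G Cb v₂ v₁ := by
  intro H
  apply h
  intro x hx
  have hRL : RL p n ≤ G := hG ▸ le_sup_left
  -- uniqueness of blocks in the partition B 2
  have huniq : ∀ b₁ ∈ B 2, ∀ b₂ ∈ B 2, ∀ a : Pt p n, a ∈ b₁ → a ∈ b₂ → b₁ = b₂ := by
    intro b₁ hb₁ b₂ hb₂ a ha₁ ha₂
    obtain ⟨b, -, hbu⟩ := (hBpart 2 hn).2 a
    have e₁ := hbu b₁ ⟨hb₁, ha₁⟩
    have e₂ := hbu b₂ ⟨hb₂, ha₂⟩
    rw [e₁, e₂]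
  -- translation moves blocks to blocks
  have key : ∀ (r w z : Pt p n), z ∈ Cb w → r + z ∈ Cb (r + w) := by
    intro r w z hz
    have hτ : Equiv.addLeft r ∈ G := hRL ⟨r, fun y => rfl⟩
    have himg : ⇑(Equiv.addLeft r) '' Cb w ∈ B 2 := hBinv 2 hn _ hτ _ (hCb w).1
    have hi : r + w ∈ ⇑(Equiv.addLeft r) '' Cb w := ⟨w, (hCb w).2, rfl⟩
    have heq : ⇑(Equiv.addLeft r) '' Cb w = Cb (r + w) :=
      huniq _ himg _ (hCb (r + w)).1 (r + w) hi (hCb (r + w)).2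
    rw [← heq]
    exact ⟨z, hz, rfl⟩
  -- step 1 : v₂ + v₂ - x ∈ Cb v₂
  have h1 : v₂ ∈ Cb ((v₂ - x) + v₂) := by
    have := key (v₂ - x) v₂ x hx
    have e : v₂ - x + x = v₂ := by abel
    rwa [e] at this
  have h2 : Cb ((v₂ - x) + v₂) = Cb v₂ :=
    huniq _ (hCb _).1 _ (hCb v₂).1 v₂ h1 (hCb v₂).2
  have h3 : (v₂ - x) + v₂ ∈ Cb v₂ := h2 ▸ (hCb ((v₂ - x) + v₂)).2
  -- step 2 : v₁ + v₂ - x ∈ Cb v₁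
  have h4 : v₁ + v₂ - x ∈ Cb v₁ := by
    have := key (v₁ - v₂) v₂ _ h3
    have e1 : v₁ - v₂ + v₂ = v₁ := by abel
    have e2 : v₁ - v₂ + (v₂ - x + v₂) = v₁ + v₂ - x := by abel
    rwa [e1, e2] at this
  -- use the hypothesis H
  obtain ⟨g, hg, hgv₂, hgv₁⟩ := H _ h4
  refine ⟨Equiv.addLeft (x - v₂) * g, mul_mem (hRL ⟨x - v₂, fun y => rfl⟩) hg, ?_, ?_⟩
  · rw [Equiv.Perm.mul_apply, hgv₁, Equiv.coe_addLeft]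
    module
  · rw [Equiv.Perm.mul_apply, hgv₂, Equiv.coe_addLeft]
    module
end

section
/- Assume n = 4, τ_0' = τ_0, τ_1' = τ_1, and τ_0, τ_1 ∈ Z(G). Assume that for every nontrivial element σ of ⟨τ_0, τ_1⟩, some orbit of ⟨σ⟩ is not fixed setwise by τ_2⁻¹τ_2'. Then v ≁ w for every w ∈ τ_2(C_v); equivalently, τ_2(C_v) is contained in a single orbit of G_v. -/
theorem Equiv.Perm.inv_apply_self {α : Type*} (f : Equiv.Perm α) (x : α) : f⁻¹ (f x) = x :=
  Equiv.symm_apply_apply f x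

theorem Equiv.Perm.apply_inv_self {α : Type*} (f : Equiv.Perm α) (x : α) : f (f⁻¹ x) = x :=
  Equiv.apply_symm_apply f x

namespace Stmt16

lemma mem_RL {p n : ℕ} {σ : Equiv.Perm (Pt p n)} :
    σ ∈ RL p n ↔ ∃ r : Pt p n, ∀ x, σ x = r + x := Iff.rfl

def tl {p n : ℕ} (a : Pt p n) : Equiv.Perm (Pt p n) := Equiv.addLeft a

@[simp] lemma tl_apply {p n : ℕ} (a x : Pt p n) : tl a x = a + x := rfl

lemma tl_mem_RL {p n : ℕ} (a : Pt p n) : tl a ∈ RL p n := ⟨a, fun _ => rfl⟩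

lemma tl_mul {p n : ℕ} (a b : Pt p n) : tl a * tl b = tl (a + b) := by
  ext x; simp [Equiv.Perm.mul_apply, add_assoc]

lemma tl_inv {p n : ℕ} (a : Pt p n) : (tl a)⁻¹ = tl (-a) := by
  rw [eq_comm, eq_inv_iff_mul_eq_one, tl_mul]
  ext x; simp

lemma tl_pow {p n : ℕ} (a : Pt p n) (m : ℕ) : (tl a) ^ m = tl (m • a) := by
  induction m with
  | zero => ext x; simp
  | succ m ih => rw [pow_succ, ih, tl_mul, succ_nsmul]

lemma tl_zpow {p n : ℕ} (a : Pt p n) (k : ℤ) : (tl a) ^ k = tl (k • a) := by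
  cases k with
  | ofNat m => rw [Int.ofNat_eq_coe, zpow_natCast, tl_pow, natCast_zsmul]
  | negSucc m =>
      have h : ((m : ℤ) + 1) • a = (m + 1) • a := by exact_mod_cast natCast_zsmul a (m + 1)
      rw [zpow_negSucc, tl_pow, tl_inv, Int.negSucc_eq, neg_smul, h]

lemma RL_comm {p n : ℕ} {a b : Equiv.Perm (Pt p n)} (ha : a ∈ RL p n) (hb : b ∈ RL p n) :
    a * b = b * a := by
  obtain ⟨r, hr⟩ := ha; obtain ⟨s, hs⟩ := hb
  ext x
  simp [Equiv.Perm.mul_apply, hr, hs, add_left_comm]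

lemma RLpi_comm {p n : ℕ} {π : Equiv.Perm (Pt p n)} {a b : Equiv.Perm (Pt p n)}
    (ha : a ∈ RLpi p n π) (hb : b ∈ RLpi p n π) : a * b = b * a := by
  obtain ⟨ρ, hρ, rfl⟩ := ha; obtain ⟨ρ', hρ', rfl⟩ := hb
  have e1 : (π⁻¹ * ρ * π) * (π⁻¹ * ρ' * π) = π⁻¹ * (ρ * ρ') * π := by group
  have e2 : (π⁻¹ * ρ' * π) * (π⁻¹ * ρ * π) = π⁻¹ * (ρ' * ρ) * π := by group
  rw [e1, e2, RL_comm hρ hρ']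

open Function in
lemma perm_fix {p : ℕ} (hp : p.Prime) (f : ZMod p → ZMod p) (hinj : Function.Injective f)
    (k : ℕ) (hit : f^[p ^ k] = id) (h0 : f 0 = 0) : ∀ y, f y = y := by
  haveI : NeZero p := ⟨hp.ne_zero⟩
  by_contra hcon
  push_neg at hcon
  obtain ⟨y, hy⟩ := hcon
  have hper : IsPeriodicPt f (p ^ k) y := by
    unfold IsPeriodicPt IsFixedPt
    rw [hit]; rfl
  have hpos : 0 < p ^ k := pow_pos hp.pos k
  set m := minimalPeriod f y with hm
  have hmdvd : m ∣ p ^ k := hper.minimalPeriod_dvd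
  have hmpos : 0 < m := hper.minimalPeriod_pos hpos
  have hne1 : m ≠ 1 := by
    intro h
    apply hy
    have h2 := isPeriodicPt_minimalPeriod f y
    rw [← hm, h] at h2
    exact h2
  have hpdvd : p ∣ m := by
    obtain ⟨i, hik, hi⟩ := (Nat.dvd_prime_pow hp).mp hmdvd
    rcases Nat.eq_zero_or_pos i with h0' | h0'
    · exfalso; apply hne1; rw [hi, h0', pow_zero]
    · rw [hi]; exact dvd_pow_self p h0'.ne'
  have key : ∀ i j, i < j → j < m → f^[i] y ≠ f^[j] y := by
    intro i j hlt hj hij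
    have h1 : f^[i] (f^[j - i] y) = f^[i] y := by
      rw [← Function.iterate_add_apply, (by omega : i + (j - i) = j), ← hij]
    have h2 : f^[j - i] y = y := (hinj.iterate i) h1
    have h3 : IsPeriodicPt f (j - i) y := h2
    have := h3.minimalPeriod_le (by omega)
    omega
  have hinjit : Set.InjOn (fun i => f^[i] y) (Finset.range m) := by
    intro i hi j hj hij
    simp only [Finset.coe_range, Set.mem_Iio] at hi hj
    dsimp only at hij
    by_contra hne
    rcases Nat.lt_or_ge i j with h | h
    · exact key i j h hj hij
    · exact key j i (by omega) hi hij.symm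
  haveI : Fintype (ZMod p) := ZMod.fintype p
  have hmlep : m ≤ p := by
    have := Finset.card_le_card_of_injOn (fun i => f^[i] y) (fun _ _ => Finset.mem_univ _) hinjit
    simpa [ZMod.card] using this
  have hmp : m = p := le_antisymm hmlep (Nat.le_of_dvd hmpos hpdvd)
  have hcard : (Finset.image (fun i => f^[i] y) (Finset.range m)).card = m := by
    rw [Finset.card_image_of_injOn hinjit, Finset.card_range]
  have huniv : Finset.image (fun i => f^[i] y) (Finset.range m) = Finset.univ :=
    Finset.eq_univ_of_card _ (by rw [hcard, hmp, ZMod.card])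
  have hmem : (0 : ZMod p) ∈ Finset.image (fun i => f^[i] y) (Finset.range m) := by
    rw [huniv]; exact Finset.mem_univ _
  obtain ⟨i, hi, hfi⟩ := Finset.mem_image.mp hmem
  simp only [Finset.mem_range] at hi
  have hfp : f^[m] y = y := isPeriodicPt_minimalPeriod f y
  have hy0 : y = 0 := by
    have h5 : f^[(m - i) + i] y = f^[m - i] (0 : ZMod p) := by
      rw [Function.iterate_add_apply, hfi]
    rw [(by omega : (m - i) + i = m), hfp, iterate_fixed h0] at h5
    exact h5
  apply hy
  rw [hy0, h0]

lemma block_struct {p n : ℕ} {G : Subgroup (Equiv.Perm (Pt p n))} (hRL : RL p n ≤ G)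
    (Bi : Set (Set (Pt p n))) (hpart : Setoid.IsPartition Bi)
    (hinv : ∀ g ∈ G, ∀ b ∈ Bi, ⇑g '' b ∈ Bi) :
    ∃ H ∈ Bi, 0 ∈ H ∧ (∀ b ∈ Bi, ∀ x ∈ b, ∀ y, (y ∈ b ↔ y - x ∈ H)) := by
  obtain ⟨H, ⟨hHB, hH0⟩, _⟩ := hpart.2 0
  refine ⟨H, hHB, hH0, ?_⟩
  intro b hb x hx y
  have himg : ⇑(tl x) '' H ∈ Bi := hinv _ (hRL (tl_mem_RL x)) H hHB
  have hxmem : x ∈ ⇑(tl x) '' H := ⟨0, hH0, by simp⟩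
  have hbeq : b = ⇑(tl x) '' H := (hpart.2 x).unique ⟨hb, hx⟩ ⟨himg, hxmem⟩
  rw [hbeq]
  constructor
  · rintro ⟨h, hh, rfl⟩
    simpa using hh
  · intro hd
    exact ⟨y - x, hd, by simp⟩

end Stmt16

open Stmt16

/-- **Lemma 5.2.** If for every nontrivial `σ ∈ ⟨τ₀, τ₁⟩` some orbit of `⟨σ⟩` is not
fixed setwise by `τ₂⁻¹τ₂'`, then `v ≁ w` for every `w ∈ τ₂(C_v)`; equivalently,
`τ₂(C_v)` is contained in a single orbit of `G_v`. -/
theorem stmt_16 (p n : ℕ) (hp : p.Prime) (hn : n = 4)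
    (π : Equiv.Perm (Pt p n))
    (G : Subgroup (Equiv.Perm (Pt p n))) (hG : G = RL p n ⊔ RLpi p n π)
    (hpG : IsPGroup p ↑G)
    (B : ℕ → Set (Set (Pt p n)))
    (hBpart : ∀ i ≤ n, Setoid.IsPartition (B i))
    (hBsize : ∀ i ≤ n, ∀ b ∈ B i, Nat.card b = p ^ i)
    (hBinv : ∀ i ≤ n, ∀ g ∈ G, ∀ b ∈ B i, ⇑g '' b ∈ B i)
    (hBref : ∀ i < n, ∀ b ∈ B i, ∃ c ∈ B (i + 1), b ⊆ c)
    (τ : ℕ → Equiv.Perm (Pt p n))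
    (hτ : ∀ i < n, τ i ∈ RL p n ∧ (∀ b ∈ B (i + 1), ⇑(τ i) '' b = b) ∧
      ¬ ∀ b ∈ B i, ⇑(τ i) '' b = b)
    (v : Pt p n)
    (τ' : ℕ → Equiv.Perm (Pt p n))
    (hτ' : ∀ i < n, τ' i ∈ RLpi p n π ∧ τ' i v = τ i v)
    (hτ'0 : τ' 0 = τ 0) (hτ'1 : τ' 1 = τ 1)
    (hZ : ∀ g ∈ G, Commute g (τ 0) ∧ Commute g (τ 1))
    (Cb : Pt p n → Set (Pt p n)) (hCb : ∀ w, Cb w ∈ B 2 ∧ w ∈ Cb w)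
    (hnofix : ∀ σ ∈ Subgroup.closure {τ 0, τ 1}, σ ≠ 1 →
      ∃ w : Pt p n,
        ⇑((τ 2)⁻¹ * τ' 2) '' {x | ∃ k : ℤ, (σ ^ k) w = x} ≠ {x | ∃ k : ℤ, (σ ^ k) w = x})
 :
    (∀ w ∈ ⇑(τ 2) '' Cb v, ∀ x ∈ Cb w, ∃ g ∈ G, g v = v ∧ g w = x) ∧
    (∀ x ∈ ⇑(τ 2) '' Cb v, ∀ y ∈ ⇑(τ 2) '' Cb v, ∃ g ∈ G, g v = v ∧ g x = y) := by
  subst hn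
  haveI : Fact p.Prime := ⟨hp⟩
  haveI : NeZero p := ⟨hp.ne_zero⟩
  have hRLle : RL p 4 ≤ G := hG ▸ le_sup_left
  have hRLpile : RLpi p 4 π ≤ G := hG ▸ le_sup_right
  obtain ⟨r0, hr0⟩ := (hτ 0 (by norm_num)).1
  obtain ⟨r1, hr1⟩ := (hτ 1 (by norm_num)).1
  obtain ⟨r2, hr2⟩ := (hτ 2 (by norm_num)).1
  obtain ⟨r3, hr3⟩ := (hτ 3 (by norm_num)).1
  obtain ⟨H1s, hH1B, hH10, hH1c⟩ :=
    block_struct hRLle (B 1) (hBpart 1 (by norm_num)) (hBinv 1 (by norm_num))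
  obtain ⟨H2s, hH2B, hH20, hH2c⟩ :=
    block_struct hRLle (B 2) (hBpart 2 (by norm_num)) (hBinv 2 (by norm_num))
  obtain ⟨H3s, hH3B, hH30, hH3c⟩ :=
    block_struct hRLle (B 3) (hBpart 3 (by norm_num)) (hBinv 3 (by norm_num))
  -- scalar conversion
  have zsm : ∀ (c : ZMod p) (x : Pt p 4), c • x = c.val • x := by
    intro c x
    rw [← Nat.cast_smul_eq_nsmul (ZMod p), ZMod.natCast_val, ZMod.cast_id]
  -- closure pack
  have mkcl : ∀ (H : Set (Pt p 4)), 0 ∈ H → (∀ x ∈ H, ∀ y, (y ∈ H ↔ y - x ∈ H)) →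
      (∀ a ∈ H, ∀ b ∈ H, a + b ∈ H) ∧ (∀ a ∈ H, -a ∈ H) ∧
      (∀ a ∈ H, ∀ b ∈ H, a - b ∈ H) ∧ (∀ (c : ZMod p), ∀ a ∈ H, c • a ∈ H) := by
    intro H h0 hc
    have hadd : ∀ a ∈ H, ∀ b ∈ H, a + b ∈ H := by
      intro a ha b hb
      exact (hc a ha (a + b)).mpr (by simpa using hb)
    have hneg : ∀ a ∈ H, -a ∈ H := by
      intro a ha
      have := (hc a ha 0).mp h0
      simpa using this
    have hsub : ∀ a ∈ H, ∀ b ∈ H, a - b ∈ H := by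
      intro a ha b hb
      rw [sub_eq_add_neg]; exact hadd a ha _ (hneg b hb)
    refine ⟨hadd, hneg, hsub, ?_⟩
    intro c a ha
    rw [zsm]
    induction c.val with
    | zero => simpa using h0
    | succ k ih => rw [succ_nsmul]; exact hadd _ ih a ha
  obtain ⟨hH1add, hH1neg, hH1sub, hH1smul⟩ := mkcl H1s hH10 (fun x hx => hH1c H1s hH1B x hx)
  obtain ⟨hH2add, hH2neg, hH2sub, hH2smul⟩ := mkcl H2s hH20 (fun x hx => hH2c H2s hH2B x hx)
  obtain ⟨hH3add, hH3neg, hH3sub, hH3smul⟩ := mkcl H3s hH30 (fun x hx => hH3c H3s hH3B x hx)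
  -- refinements
  have hH12 : H1s ⊆ H2s := by
    obtain ⟨c, hcB, hsub⟩ := hBref 1 (by norm_num) H1s hH1B
    have : c = H2s := ((hBpart 2 (by norm_num)).2 0).unique ⟨hcB, hsub hH10⟩ ⟨hH2B, hH20⟩
    exact this ▸ hsub
  have hH23 : H2s ⊆ H3s := by
    obtain ⟨c, hcB, hsub⟩ := hBref 2 (by norm_num) H2s hH2B
    have : c = H3s := ((hBpart 3 (by norm_num)).2 0).unique ⟨hcB, hsub hH20⟩ ⟨hH3B, hH30⟩
    exact this ▸ hsub
  -- r memberships
  have hr0H1 : r0 ∈ H1s := by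
    have hfix := (hτ 0 (by norm_num)).2.1 H1s hH1B
    have : r0 ∈ ⇑(τ 0) '' H1s := ⟨0, hH10, by rw [hr0, add_zero]⟩
    rwa [hfix] at this
  have hr1H2 : r1 ∈ H2s := by
    have hfix := (hτ 1 (by norm_num)).2.1 H2s hH2B
    have : r1 ∈ ⇑(τ 1) '' H2s := ⟨0, hH20, by rw [hr1, add_zero]⟩
    rwa [hfix] at this
  have hr2H3 : r2 ∈ H3s := by
    have hfix := (hτ 2 (by norm_num)).2.1 H3s hH3B
    have : r2 ∈ ⇑(τ 2) '' H3s := ⟨0, hH30, by rw [hr2, add_zero]⟩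
    rwa [hfix] at this
  -- non-memberships
  have hfixgen : ∀ (i : ℕ), i ≤ 4 → ∀ (H : Set (Pt p 4)), H ∈ B i → 0 ∈ H →
      (∀ b ∈ B i, ∀ x ∈ b, ∀ y, (y ∈ b ↔ y - x ∈ H)) →
      ∀ (σ : Equiv.Perm (Pt p 4)) (r : Pt p 4), (∀ x, σ x = r + x) → r ∈ H →
      ∀ b ∈ B i, ⇑σ '' b = b := by
    intro i hi H hHB h0 hc σ r hσ hrH b hb
    obtain ⟨hadd, hneg, hsub, _⟩ := mkcl H h0 (fun x hx => hc H hHB x hx)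
    obtain ⟨x, hx⟩ : b.Nonempty :=
      Set.nonempty_iff_ne_empty.mpr (fun h => (hBpart i hi).1 (h ▸ hb))
    ext y
    constructor
    · rintro ⟨z, hz, rfl⟩
      have hz' : z - x ∈ H := (hc b hb x hx z).mp hz
      rw [hσ, hc b hb x hx]
      have he : r + z - x = r + (z - x) := by abel
      rw [he]
      exact hadd r hrH _ hz'
    · intro hy
      refine ⟨y - r, ?_, by rw [hσ]; abel⟩
      rw [hc b hb x hx] at hy ⊢
      have : y - r - x = (y - x) - r := by abel
      rw [this]
      exact hsub _ hy _ hrH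
  -- non-memberships
  have hr0ne : r0 ≠ 0 := by
    intro h
    apply (hτ 0 (by norm_num)).2.2
    intro b _
    have : ⇑(τ 0) = id := by
      funext x; rw [hr0, h, zero_add]; rfl
    rw [this, Set.image_id]
  have hr1nH1 : r1 ∉ H1s := by
    intro h
    exact (hτ 1 (by norm_num)).2.2
      (hfixgen 1 (by norm_num) H1s hH1B hH10 hH1c (τ 1) r1 hr1 h)
  have hr2nH2 : r2 ∉ H2s := by
    intro h
    exact (hτ 2 (by norm_num)).2.2
      (hfixgen 2 (by norm_num) H2s hH2B hH20 hH2c (τ 2) r2 hr2 h)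
  have hr3nH3 : r3 ∉ H3s := by
    intro h
    exact (hτ 3 (by norm_num)).2.2
      (hfixgen 3 (by norm_num) H3s hH3B hH30 hH3c (τ 3) r3 hr3 h)
  -- cardinalities
  have cardH1 : Nat.card H1s = p ^ 1 := hBsize 1 (by norm_num) H1s hH1B
  have cardH2 : Nat.card H2s = p ^ 2 := hBsize 2 (by norm_num) H2s hH2B
  have cardH3 : Nat.card H3s = p ^ 3 := hBsize 3 (by norm_num) H3s hH3B
  have cardR : Nat.card (Pt p 4) = p ^ 4 := by
    simp [Nat.card_fun, Nat.card_zmod]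
  -- span of H2 by r0, r1
  have span2 : ∀ h ∈ H2s, ∃ a b : ZMod p, h = a • r0 + b • r1 := by
    have hr0H2 : r0 ∈ H2s := hH12 hr0H1
    set f : ZMod p × ZMod p → H2s := fun ab =>
      ⟨ab.1 • r0 + ab.2 • r1, hH2add _ (hH2smul ab.1 r0 hr0H2) _ (hH2smul ab.2 r1 hr1H2)⟩
      with hf
    have hinj : Function.Injective f := by
      rintro ⟨a, b⟩ ⟨a', b'⟩ hfe
      have h : a • r0 + b • r1 = a' • r0 + b' • r1 := congrArg Subtype.val hfe
      have hbb : b = b' := by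
        by_contra hne
        have e : (b - b') • r1 = (a' - a) • r0 := by
          rw [sub_smul, sub_smul, sub_eq_sub_iff_add_eq_add, add_comm (b • r1) (a • r0)]
          exact h
        have : r1 = ((b - b')⁻¹ * (a' - a)) • r0 := by
          rw [mul_smul, ← e, smul_smul, inv_mul_cancel₀ (sub_ne_zero.mpr hne), one_smul]
        exact hr1nH1 (this ▸ hH1smul _ r0 hr0H1)
      subst hbb
      have h2 : a • r0 = a' • r0 := by
        have := add_right_cancel h
        exact this
      have haa : a = a' := by
        by_contra hne
        have e : (a - a') • r0 = 0 := by rw [sub_smul, h2, sub_self]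
        have : r0 = 0 := by
          have := congrArg (fun z => (a - a')⁻¹ • z) e
          simpa [smul_smul, inv_mul_cancel₀ (sub_ne_zero.mpr hne)] using this
        exact hr0ne this
      rw [haa]
    have hcard : Nat.card (ZMod p × ZMod p) = Nat.card H2s := by
      rw [cardH2, Nat.card_prod, Nat.card_zmod, sq]
    have hsurj := ((Nat.bijective_iff_injective_and_card f).mpr ⟨hinj, hcard⟩).2
    intro h hh
    obtain ⟨⟨a, b⟩, hab⟩ := hsurj ⟨h, hh⟩
    exact ⟨a, b, (congrArg Subtype.val hab).symm⟩
  -- span of H3 by H2 and r2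
  have span3 : ∀ s ∈ H3s, ∃ h ∈ H2s, ∃ j : ZMod p, s = h + j • r2 := by
    set f : H2s × ZMod p → H3s := fun x =>
      ⟨x.1.1 + x.2 • r2, hH3add _ (hH23 x.1.2) _ (hH3smul x.2 r2 hr2H3)⟩ with hf
    have hinj : Function.Injective f := by
      rintro ⟨⟨h, hh⟩, j⟩ ⟨⟨h', hh'⟩, j'⟩ hfe
      have he : h + j • r2 = h' + j' • r2 := congrArg Subtype.val hfe
      have hjj : j = j' := by
        by_contra hne
        have e : (j - j') • r2 = h' - h := by
          rw [sub_smul, sub_eq_sub_iff_add_eq_add, add_comm (j • r2) h]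
          exact he
        have : r2 = (j - j')⁻¹ • (h' - h) := by
          rw [← e, smul_smul, inv_mul_cancel₀ (sub_ne_zero.mpr hne), one_smul]
        exact hr2nH2 (this ▸ hH2smul _ _ (hH2sub h' hh' h hh))
      subst hjj
      have : h = h' := by
        have := add_right_cancel he
        exact this
      simp [this]
    have hcard : Nat.card (H2s × ZMod p) = Nat.card H3s := by
      rw [Nat.card_prod, Nat.card_zmod, cardH2, cardH3]; ring
    have hsurj := ((Nat.bijective_iff_injective_and_card f).mpr ⟨hinj, hcard⟩).2
    intro s hs
    obtain ⟨⟨⟨h, hh⟩, j⟩, hab⟩ := hsurj ⟨s, hs⟩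
    exact ⟨h, hh, j, (congrArg Subtype.val hab).symm⟩
  -- full decomposition of the space
  have hFmain : ∃ F : H2s × ZMod p × ZMod p ≃ Pt p 4,
      ∀ t, F t = v + (t.1.1 + t.2.1 • r2 + t.2.2 • r3) := by
    set F : H2s × ZMod p × ZMod p → Pt p 4 :=
      fun t => v + (t.1.1 + t.2.1 • r2 + t.2.2 • r3) with hF
    have hinj : Function.Injective F := by
      rintro ⟨⟨h, hh⟩, j, c⟩ ⟨⟨h', hh'⟩, j', c'⟩ hfe
      simp only [hF] at hfe
      have he : h + j • r2 + c • r3 = h' + j' • r2 + c' • r3 := by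
        have := add_left_cancel hfe
        exact this
      have hcc : c = c' := by
        by_contra hne
        have e : (c - c') • r3 = (h' + j' • r2) - (h + j • r2) := by
          have h9 : c • r3 + (h + j • r2) = (h' + j' • r2) + c' • r3 := by
            calc c • r3 + (h + j • r2) = h + j • r2 + c • r3 := by abel
            _ = h' + j' • r2 + c' • r3 := he
          rw [sub_smul, sub_eq_sub_iff_add_eq_add, h9]
        have hmem : (h' + j' • r2) - (h + j • r2) ∈ H3s :=
          hH3sub _ (hH3add _ (hH23 hh') _ (hH3smul j' r2 hr2H3))
            _ (hH3add _ (hH23 hh) _ (hH3smul j r2 hr2H3))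
        have : r3 = (c - c')⁻¹ • ((h' + j' • r2) - (h + j • r2)) := by
          rw [← e, smul_smul, inv_mul_cancel₀ (sub_ne_zero.mpr hne), one_smul]
        exact hr3nH3 (this ▸ hH3smul _ _ hmem)
      subst hcc
      have he2 : h + j • r2 = h' + j' • r2 := by
        have := add_right_cancel he
        exact this
      have hjj : j = j' := by
        by_contra hne
        have e : (j - j') • r2 = h' - h := by
          rw [sub_smul, sub_eq_sub_iff_add_eq_add, add_comm (j • r2) h]
          exact he2
        have : r2 = (j - j')⁻¹ • (h' - h) := by
          rw [← e, smul_smul, inv_mul_cancel₀ (sub_ne_zero.mpr hne), one_smul]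
        exact hr2nH2 (this ▸ hH2smul _ _ (hH2sub h' hh' h hh))
      subst hjj
      have : h = h' := by
        have := add_right_cancel he2
        exact this
      simp [this]
    have hcard : Nat.card (H2s × ZMod p × ZMod p) = Nat.card (Pt p 4) := by
      rw [cardR, Nat.card_prod, Nat.card_prod, Nat.card_zmod, cardH2]; ring
    have hbij := (Nat.bijective_iff_injective_and_card F).mpr ⟨hinj, hcard⟩
    exact ⟨Equiv.ofBijective F hbij, fun t => rfl⟩
  obtain ⟨F, hF⟩ := hFmain
  set jf : Pt p 4 → ZMod p := fun x => (F.symm x).2.1 with hjf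
  set fib : Pt p 4 → ZMod p := fun x => (F.symm x).2.2 with hfib
  have dec1 : ∀ x : Pt p 4, ∃ h ∈ H2s, x = v + (h + jf x • r2 + fib x • r3) := by
    intro x
    refine ⟨(F.symm x).1.1, (F.symm x).1.2, ?_⟩
    have := hF (F.symm x)
    rw [F.apply_symm_apply] at this
    exact this
  have dec2 : ∀ (x : Pt p 4) (h : Pt p 4) (j c : ZMod p), h ∈ H2s →
      x = v + (h + j • r2 + c • r3) → jf x = j ∧ fib x = c := by
    intro x h j c hh hx
    have : F (⟨h, hh⟩, j, c) = x := by rw [hF]; exact hx.symm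
    have he : F.symm x = (⟨h, hh⟩, j, c) := by rw [← this, F.symm_apply_apply]
    constructor
    · show (F.symm x).2.1 = j
      rw [he]
    · show (F.symm x).2.2 = c
      rw [he]
  have fibv : jf v = 0 ∧ fib v = 0 := by
    apply dec2 v 0 0 0 hH20
    simp
  have fibH3 : ∀ (x t : Pt p 4), t ∈ H3s → fib (x + t) = fib x := by
    intro x t ht
    obtain ⟨h, hh, hx⟩ := dec1 x
    obtain ⟨h2, hh2, j2, ht2⟩ := span3 t ht
    set J := jf x with hJ
    set C := fib x with hC
    have : x + t = v + ((h + h2) + (J + j2) • r2 + C • r3) := by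
      rw [hx, ht2]; module
    exact (dec2 _ _ _ _ (hH2add h hh h2 hh2) this).2
  have jfH2 : ∀ (x t : Pt p 4), t ∈ H2s → jf (x + t) = jf x ∧ fib (x + t) = fib x := by
    intro x t ht
    obtain ⟨h, hh, hx⟩ := dec1 x
    set J := jf x with hJ
    set C := fib x with hC
    have : x + t = v + ((h + t) + J • r2 + C • r3) := by
      rw [hx]; module
    exact dec2 _ _ _ _ (hH2add h hh t ht) this
  have jfr2 : ∀ (x : Pt p 4) (j : ZMod p),
      jf (x + j • r2) = jf x + j ∧ fib (x + j • r2) = fib x := by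
    intro x j
    obtain ⟨h, hh, hx⟩ := dec1 x
    set J := jf x with hJ
    set C := fib x with hC
    have : x + j • r2 = v + (h + (J + j) • r2 + C • r3) := by
      rw [hx]; module
    exact dec2 _ _ _ _ hh this
  have fibdiff : ∀ x y : Pt p 4, fib x = fib y → x - y ∈ H3s := by
    intro x y he
    obtain ⟨h, hh, hx⟩ := dec1 x
    obtain ⟨h', hh', hy⟩ := dec1 y
    set J := jf x with hJ
    set J' := jf y with hJ'
    set C := fib x with hC
    set C' := fib y with hC'
    have : x - y = (h - h') + (J - J') • r2 := by
      rw [hx, hy, he]; module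
    rw [this]
    exact hH3add _ (hH23 (hH2sub h hh h' hh')) _ (hH3smul _ r2 hr2H3)
  have jfdiff : ∀ x y : Pt p 4, fib x = fib y → jf x = jf y → x - y ∈ H2s := by
    intro x y he hj
    obtain ⟨h, hh, hx⟩ := dec1 x
    obtain ⟨h', hh', hy⟩ := dec1 y
    set J := jf x with hJ
    set J' := jf y with hJ'
    set C := fib x with hC
    set C' := fib y with hC'
    have : x - y = h - h' := by
      rw [hx, hy, he, hj]; module
    rw [this]
    exact hH2sub h hh h' hh'
  -- centrality
  have cent : ∀ g ∈ G, ∀ (x h : Pt p 4), h ∈ H2s → g (x + h) = g x + h := by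
    intro g hg x h hh
    obtain ⟨a, b, hab⟩ := span2 h hh
    have hτ0 : τ 0 = tl r0 := Equiv.ext fun z => hr0 z
    have hτ1 : τ 1 = tl r1 := Equiv.ext fun z => hr1 z
    have hkey : tl h = τ 0 ^ a.val * τ 1 ^ b.val := by
      rw [hτ0, hτ1, tl_pow, tl_pow, tl_mul]
      congr 1
      rw [hab, zsm a r0, zsm b r1]
    have hcom : g * tl h = tl h * g := by
      rw [hkey]
      exact ((hZ g hg).1.pow_right a.val).mul_right ((hZ g hg).2.pow_right b.val)
    have h2 := congrArg (fun σ : Equiv.Perm (Pt p 4) => σ x) hcom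
    simp only [Equiv.Perm.mul_apply, tl_apply] at h2
    rw [add_comm x h, h2, add_comm]
  -- H3-coset preservation
  have cos3 : ∀ g ∈ G, ∀ (x t : Pt p 4), t ∈ H3s → ∃ t' ∈ H3s, g (x + t) = g x + t' := by
    intro g hg x t ht
    obtain ⟨b, ⟨hbB, hxb⟩, _⟩ := (hBpart 3 (by norm_num)).2 x
    have himg : ⇑g '' b ∈ B 3 := hBinv 3 (by norm_num) g hg b hbB
    have hxt : x + t ∈ b := (hH3c b hbB x hxb (x + t)).mpr (by simpa using ht)
    have h1 : g (x + t) ∈ ⇑g '' b := ⟨x + t, hxt, rfl⟩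
    have h2 : g x ∈ ⇑g '' b := ⟨x, hxb, rfl⟩
    have h3 := (hH3c _ himg _ h2 _).mp h1
    exact ⟨g (x + t) - g x, h3, by abel⟩
  -- F1 : stabilizer elements preserve every H3-coset
  have F1 : ∀ g ∈ G, g v = v → ∀ x, g x - x ∈ H3s := by
    intro g hg hgv
    have hgm : ∀ m : ℕ, g ^ m ∈ G ∧ (g ^ m) v = v := by
      intro m
      induction m with
      | zero => exact ⟨by rw [pow_zero]; exact one_mem G, by simp⟩
      | succ m ih =>
        refine ⟨by rw [pow_succ]; exact mul_mem ih.1 hg, ?_⟩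
        rw [pow_succ, Equiv.Perm.mul_apply, hgv, ih.2]
    set q : ZMod p → ZMod p := fun c => fib (g (v + c • r3)) with hq
    have compat : ∀ x, fib (g x) = q (fib x) := by
      intro x
      obtain ⟨h, hh, hx⟩ := dec1 x
      set J := jf x with hJ
      set C := fib x with hC
      have hx2 : x = (v + C • r3) + (h + J • r2) := by rw [hx]; module
      have hmem : h + J • r2 ∈ H3s := hH3add _ (hH23 hh) _ (hH3smul J r2 hr2H3)
      obtain ⟨t', ht', he⟩ := cos3 g hg (v + C • r3) _ hmem
      rw [hx2, he, fibH3 _ _ ht']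
    have fibvc : ∀ c : ZMod p, fib (v + c • r3) = c := by
      intro c
      exact (dec2 _ 0 0 c hH20 (by module)).2
    have hqit : ∀ (m : ℕ) (c : ZMod p), q^[m] c = fib ((g ^ m) (v + c • r3)) := by
      intro m
      induction m with
      | zero =>
        intro c
        simp only [Function.iterate_zero, id_eq, pow_zero, Equiv.Perm.one_apply]
        exact (fibvc c).symm
      | succ m ih =>
        intro c
        rw [Function.iterate_succ_apply', ih c, pow_succ', Equiv.Perm.mul_apply, compat _]
    obtain ⟨k, hk⟩ := hpG ⟨g, hg⟩
    have hgp : g ^ (p ^ k) = 1 := by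
      have := congrArg Subtype.val hk
      simpa using this
    have hqinj : Function.Injective q := by
      intro c c' he
      simp only [hq] at he
      have hsub : g (v + c • r3) - g (v + c' • r3) ∈ H3s := fibdiff _ _ he
      have heq : g (v + c • r3) = g (v + c' • r3) + (g (v + c • r3) - g (v + c' • r3)) := by
        abel
      obtain ⟨t', ht', he2⟩ := cos3 g⁻¹ (inv_mem hg) (g (v + c' • r3)) _ hsub
      have h3 : v + c • r3 = (v + c' • r3) + t' := by
        have h4 := congrArg (⇑g⁻¹) heq
        rw [Equiv.Perm.inv_apply_self, he2, Equiv.Perm.inv_apply_self] at h4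
        exact h4
      have h6 : (c - c') • r3 = t' := by
        have h5 : c • r3 = c' • r3 + t' := by
          apply add_left_cancel (a := v)
          rw [← add_assoc]
          exact h3
        rw [sub_smul, h5]; abel
      by_contra hne
      apply hr3nH3
      have : r3 = (c - c')⁻¹ • ((c - c') • r3) := by
        rw [smul_smul, inv_mul_cancel₀ (sub_ne_zero.mpr hne), one_smul]
      rw [this, h6]
      exact hH3smul _ _ ht'
    have hqid := perm_fix hp q hqinj k (by
        funext c
        rw [hqit (p ^ k) c, hgp]
        simpa using fibvc c)
      (by
        simp only [hq, zero_smul, add_zero, hgv]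
        exact fibv.2)
    intro x
    have : fib (g x) = fib x := by rw [compat x, hqid]
    exact fibdiff (g x) x this
  -- F2 : stabilizer elements move v + r2 within its H2-coset
  have F2 : ∀ g ∈ G, g v = v → g (v + r2) - (v + r2) ∈ H2s := by
    intro g hg hgv
    have hgm : ∀ m : ℕ, g ^ m ∈ G ∧ (g ^ m) v = v := by
      intro m
      induction m with
      | zero => exact ⟨by rw [pow_zero]; exact one_mem G, by simp⟩
      | succ m ih =>
        refine ⟨by rw [pow_succ]; exact mul_mem ih.1 hg, ?_⟩
        rw [pow_succ, Equiv.Perm.mul_apply, hgv, ih.2]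
    have gfib0 : ∀ g' ∈ G, g' v = v → ∀ x, fib x = 0 → fib (g' x) = 0 := by
      intro g' hg' hg'v x hx0
      have h1 := F1 g' hg' hg'v x
      have h2 : g' x = x + (g' x - x) := by abel
      rw [h2, fibH3 _ _ h1, hx0]
    set q2 : ZMod p → ZMod p := fun j => jf (g (v + j • r2)) with hq2
    have fibvr2 : ∀ j : ZMod p, fib (v + j • r2) = 0 ∧ jf (v + j • r2) = j := by
      intro j
      have := dec2 (v + j • r2) 0 j 0 hH20 (by module)
      exact ⟨this.2, this.1⟩
    have compat : ∀ x, fib x = 0 → jf (g x) = q2 (jf x) := by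
      intro x hx0
      obtain ⟨h, hh, hx⟩ := dec1 x
      set J := jf x with hJ
      set C := fib x with hC
      have hx2 : x = (v + J • r2) + h := by rw [hx, hx0]; module
      rw [hx2, cent g hg _ h hh, (jfH2 _ h hh).1]
    have hqit : ∀ (m : ℕ) (j : ZMod p), q2^[m] j = jf ((g ^ m) (v + j • r2)) := by
      intro m
      induction m with
      | zero =>
        intro j
        simp only [Function.iterate_zero, id_eq, pow_zero, Equiv.Perm.one_apply]
        exact ((fibvr2 j).2).symm
      | succ m ih =>
        intro j
        have hy0 : fib ((g ^ m) (v + j • r2)) = 0 :=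
          gfib0 (g ^ m) (hgm m).1 (hgm m).2 (v + j • r2) (fibvr2 j).1
        rw [Function.iterate_succ_apply', ih j, pow_succ', Equiv.Perm.mul_apply,
          compat _ hy0]
    obtain ⟨k, hk⟩ := hpG ⟨g, hg⟩
    have hgp : g ^ (p ^ k) = 1 := by
      have := congrArg Subtype.val hk
      simpa using this
    have hq2inj : Function.Injective q2 := by
      intro j j' he
      simp only [hq2] at he
      have hf1 : fib (g (v + j • r2)) = 0 := gfib0 g hg hgv _ (fibvr2 j).1
      have hf2 : fib (g (v + j' • r2)) = 0 := gfib0 g hg hgv _ (fibvr2 j').1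
      have hsub : g (v + j • r2) - g (v + j' • r2) ∈ H2s :=
        jfdiff _ _ (hf1.trans hf2.symm) he
      have heq : g (v + j • r2) = g (v + j' • r2) + (g (v + j • r2) - g (v + j' • r2)) := by
        abel
      have h4 := congrArg (⇑g⁻¹) heq
      rw [Equiv.Perm.inv_apply_self, cent g⁻¹ (inv_mem hg) _ _ hsub,
        Equiv.Perm.inv_apply_self] at h4
      have h6 : (j - j') • r2 = g (v + j • r2) - g (v + j' • r2) := by
        calc (j - j') • r2 = (v + j • r2) - (v + j' • r2) := by rw [sub_smul]; abel
        _ = (v + j' • r2 + (g (v + j • r2) - g (v + j' • r2))) - (v + j' • r2) := by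
              rw [← h4]
        _ = g (v + j • r2) - g (v + j' • r2) := by abel
      by_contra hne
      apply hr2nH2
      have h7 : r2 = (j - j')⁻¹ • ((j - j') • r2) := by
        rw [smul_smul, inv_mul_cancel₀ (sub_ne_zero.mpr hne), one_smul]
      rw [h7, h6]
      exact hH2smul _ _ hsub
    have hq2id := perm_fix hp q2 hq2inj k (by
        funext j
        rw [hqit (p ^ k) j, hgp]
        simpa using (fibvr2 j).2)
      (by
        simp only [hq2, zero_smul, add_zero, hgv]
        exact fibv.1)
    have hone : v + r2 = v + (1 : ZMod p) • r2 := by rw [one_smul]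
    have h1 : jf (g (v + r2)) = 1 := by
      rw [hone, compat _ (fibvr2 1).1, (fibvr2 1).2, hq2id]
    have h0 : fib (g (v + r2)) = 0 := by
      rw [hone]
      exact gfib0 g hg hgv _ (fibvr2 1).1
    have hfva : fib (v + r2) = 0 := by rw [hone]; exact (fibvr2 1).1
    have hjva : jf (v + r2) = 1 := by rw [hone]; exact (fibvr2 1).2
    exact jfdiff _ _ (h0.trans hfva.symm) (h1.trans hjva.symm)
  -- key elements
  have h2lt : (2:ℕ) < 4 := by norm_num
  have h3lt : (3:ℕ) < 4 := by norm_num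
  set δ : Equiv.Perm (Pt p 4) := (τ 2)⁻¹ * τ' 2 with hδ
  have hδG : δ ∈ G := mul_mem (inv_mem (hRLle (hτ 2 h2lt).1)) (hRLpile (hτ' 2 h2lt).1)
  have hδv : δ v = v := by
    rw [hδ, Equiv.Perm.mul_apply, (hτ' 2 h2lt).2, Equiv.Perm.inv_apply_self]
  set δ3 : Equiv.Perm (Pt p 4) := (τ 3)⁻¹ * τ' 3 with hδ3
  have hδ3G : δ3 ∈ G := mul_mem (inv_mem (hRLle (hτ 3 h3lt).1)) (hRLpile (hτ' 3 h3lt).1)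
  have hδ3v : δ3 v = v := by
    rw [hδ3, Equiv.Perm.mul_apply, (hτ' 3 h3lt).2, Equiv.Perm.inv_apply_self]
  have hε : ∀ z, τ' 2 z = r2 + δ z := by
    intro z
    have h9 : τ' 2 = τ 2 * δ := by rw [hδ]; group
    rw [h9, Equiv.Perm.mul_apply, hr2]
  have hη : ∀ z, τ' 3 z = r3 + δ3 z := by
    intro z
    have h9 : τ' 3 = τ 3 * δ3 := by rw [hδ3]; group
    rw [h9, Equiv.Perm.mul_apply, hr3]
  have hcom23 : τ' 2 * τ' 3 = τ' 3 * τ' 2 := RLpi_comm (hτ' 2 h2lt).1 (hτ' 3 h3lt).1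
  -- the displacement set S
  set Sset : Set (Pt p 4) := {s | ∃ g ∈ G, g v = v ∧ g (v + r2) = (v + r2) + s} with hSset
  have SsetH2 : ∀ s ∈ Sset, s ∈ H2s := by
    rintro s ⟨g, hg, hgv, hgw⟩
    have h9 := F2 g hg hgv
    rw [hgw] at h9
    have h8 : (v + r2) + s - (v + r2) = s := by abel
    rwa [h8] at h9
  have hCbv : ∀ y, y ∈ Cb v ↔ y - v ∈ H2s := fun y => hH2c (Cb v) (hCb v).1 v (hCb v).2 y
  by_cases hfull : ∀ s ∈ H2s, s ∈ Sset
  · constructor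
    · intro w hw x hx
      obtain ⟨u0, hu0, hwu⟩ := hw
      have hwv : w = (v + r2) + (u0 - v) := by rw [← hwu, hr2]; abel
      have hu0H : u0 - v ∈ H2s := (hCbv u0).mp hu0
      have hCbw : ∀ y, y ∈ Cb w ↔ y - w ∈ H2s :=
        fun y => hH2c (Cb w) (hCb w).1 w (hCb w).2 y
      have hxw : x - w ∈ H2s := (hCbw x).mp hx
      obtain ⟨g, hg, hgv, hgw⟩ := hfull (x - w) hxw
      refine ⟨g, hg, hgv, ?_⟩
      rw [hwv, cent g hg _ _ hu0H, hgw, hwv]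
      abel
    · intro x hx y hy
      obtain ⟨a, ha, hax⟩ := hx
      obtain ⟨b, hb, hby⟩ := hy
      have hav : a - v ∈ H2s := (hCbv a).mp ha
      have hbv : b - v ∈ H2s := (hCbv b).mp hb
      have hs : (b - a) ∈ H2s := by
        have h9 := hH2sub _ hbv _ hav
        have h8 : b - v - (a - v) = b - a := by abel
        rwa [h8] at h9
      obtain ⟨g, hg, hgv, hgw⟩ := hfull (b - a) hs
      refine ⟨g, hg, hgv, ?_⟩
      have hxa : x = (v + r2) + (a - v) := by rw [← hax, hr2]; abel
      have hya : y = (v + r2) + (b - v) := by rw [← hby, hr2]; abel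
      rw [hxa, cent g hg _ _ hav, hgw, hya]
      abel
  · exfalso
    push_neg at hfull
    obtain ⟨s0, hs0H, hs0n⟩ := hfull
    -- closure properties of Sset
    have S0 : (0 : Pt p 4) ∈ Sset := ⟨1, one_mem G, by simp, by simp⟩
    have Sadd : ∀ s ∈ Sset, ∀ s' ∈ Sset, s + s' ∈ Sset := by
      rintro s ⟨g, hg, hgv, hgw⟩ s' ⟨g', hg', hgv', hgw'⟩
      refine ⟨g * g', mul_mem hg hg', ?_, ?_⟩
      · rw [Equiv.Perm.mul_apply, hgv', hgv]
      · rw [Equiv.Perm.mul_apply, hgw', cent g hg _ s' (SsetH2 s' ⟨g', hg', hgv', hgw'⟩),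
          hgw]
        abel
    have SsmulN : ∀ (k : ℕ), ∀ s ∈ Sset, k • s ∈ Sset := by
      intro k
      induction k with
      | zero => intro s hs; simpa using S0
      | succ k ih =>
        intro s hs
        rw [succ_nsmul]
        exact Sadd _ (ih s hs) _ hs
    have SsmulZ : ∀ (a : ZMod p), ∀ s ∈ Sset, a • s ∈ Sset := by
      intro a s hs
      rw [zsm]
      exact SsmulN _ s hs
    -- find the line containing Sset
    obtain ⟨u, huH2, hune, hSL⟩ :
        ∃ u, u ∈ H2s ∧ u ≠ 0 ∧ ∀ s ∈ Sset, ∃ a : ZMod p, s = a • u := by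
      by_cases hS0 : ∀ s ∈ Sset, s = 0
      · exact ⟨r0, hH12 hr0H1, hr0ne, fun s hs => ⟨0, by rw [hS0 s hs, zero_smul]⟩⟩
      · push_neg at hS0
        obtain ⟨s1, hs1S, hs1n⟩ := hS0
        by_cases hdep : ∀ s' ∈ Sset, ∃ a : ZMod p, s' = a • s1
        · exact ⟨s1, SsetH2 s1 hs1S, hs1n, hdep⟩
        · push_neg at hdep
          obtain ⟨s2, hs2S, hs2n⟩ := hdep
          -- s1, s2 independent: every element of H2s lies in Sset, contradiction
          exfalso
          apply hs0n
          set f2 : ZMod p × ZMod p → H2s := fun ab =>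
            ⟨ab.1 • s1 + ab.2 • s2,
              hH2add _ (hH2smul ab.1 s1 (SsetH2 s1 hs1S)) _ (hH2smul ab.2 s2 (SsetH2 s2 hs2S))⟩
            with hf2
          have hinj : Function.Injective f2 := by
            rintro ⟨a, b⟩ ⟨a', b'⟩ hfe
            have h : a • s1 + b • s2 = a' • s1 + b' • s2 := congrArg Subtype.val hfe
            have hbb : b = b' := by
              by_contra hne
              apply hs2n ((b - b')⁻¹ * (a' - a))
              have e : (b - b') • s2 = (a' - a) • s1 := by
                rw [sub_smul, sub_smul, sub_eq_sub_iff_add_eq_add, add_comm (b • s2) (a • s1)]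
                exact h
              rw [mul_smul, ← e, smul_smul, inv_mul_cancel₀ (sub_ne_zero.mpr hne), one_smul]
            subst hbb
            have h2 : a • s1 = a' • s1 := by
              have := add_right_cancel h
              exact this
            have haa : a = a' := by
              by_contra hne
              apply hs1n
              have e : (a - a') • s1 = 0 := by rw [sub_smul, h2, sub_self]
              have h9 := congrArg (fun z => (a - a')⁻¹ • z) e
              simpa [smul_smul, inv_mul_cancel₀ (sub_ne_zero.mpr hne)] using h9
            rw [haa]
          have hcard : Nat.card (ZMod p × ZMod p) = Nat.card H2s := by
            rw [cardH2, Nat.card_prod, Nat.card_zmod, sq]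
          have hsurj := ((Nat.bijective_iff_injective_and_card f2).mpr ⟨hinj, hcard⟩).2
          obtain ⟨⟨a, b⟩, hab⟩ := hsurj ⟨s0, hs0H⟩
          have : a • s1 + b • s2 = s0 := congrArg Subtype.val hab
          rw [← this]
          exact Sadd _ (SsmulZ a s1 hs1S) _ (SsmulZ b s2 hs2S)
    -- the line predicate
    set Lp : Pt p 4 → Prop := fun z => ∃ a : ZMod p, z = a • u with hLp
    have L0 : Lp 0 := ⟨0, by rw [zero_smul]⟩
    have Ladd : ∀ z z', Lp z → Lp z' → Lp (z + z') := by
      rintro z z' ⟨a, rfl⟩ ⟨a', rfl⟩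
      exact ⟨a + a', by rw [add_smul]⟩
    have LH2 : ∀ z, Lp z → z ∈ H2s := by
      rintro z ⟨a, rfl⟩
      exact hH2smul a u huH2
    -- the R relation
    have hR : ∀ ξ ∈ G, ∀ y : Pt p 4, ∃ l, Lp l ∧ ξ (y + r2) = ξ y + r2 + l := by
      intro ξ hξ y
      set g : Equiv.Perm (Pt p 4) := tl (v - ξ y) * (ξ * tl (y - v)) with hg
      have hgG : g ∈ G := mul_mem (hRLle (tl_mem_RL _)) (mul_mem hξ (hRLle (tl_mem_RL _)))
      have hgv : g v = v := by
        rw [hg]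
        simp only [Equiv.Perm.mul_apply, tl_apply]
        rw [sub_add_cancel, sub_add_cancel]
      have hy2 : (y - v) + (v + r2) = y + r2 := by abel
      have hgw : g (v + r2) = (v - ξ y) + ξ (y + r2) := by
        rw [hg]
        simp only [Equiv.Perm.mul_apply, tl_apply]
        rw [hy2]
      have hmem : g (v + r2) - (v + r2) ∈ Sset :=
        ⟨g, hgG, hgv, by abel⟩
      obtain ⟨a, ha⟩ := hSL _ hmem
      refine ⟨g (v + r2) - (v + r2), ⟨a, ha⟩, ?_⟩
      have h9 : ξ (y + r2) = (g (v + r2)) - (v - ξ y) := by rw [hgw]; abel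
      rw [h9]
      abel
    have hRN : ∀ ξ ∈ G, ∀ y : Pt p 4, ∀ k : ℕ,
        ∃ l, Lp l ∧ ξ (y + k • r2) = ξ y + k • r2 + l := by
      intro ξ hξ y k
      induction k with
      | zero => exact ⟨0, L0, by simp⟩
      | succ k ih =>
        obtain ⟨l, hl, hEq⟩ := ih
        obtain ⟨l', hl', hEq'⟩ := hR ξ hξ (y + k • r2)
        refine ⟨l + l', Ladd _ _ hl hl', ?_⟩
        have h9 : y + (k + 1) • r2 = (y + k • r2) + r2 := by
          rw [succ_nsmul]; abel
        rw [h9, hEq', hEq, succ_nsmul]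
        abel
    -- main induction over fibers
    have hMC : ∀ c : ℕ, ∀ x : Pt p 4, (∃ s ∈ H3s, x = v + (s + c • r3)) →
        ∃ l, Lp l ∧ δ x = x + l := by
      intro c
      induction c with
      | zero =>
        rintro x ⟨s, hs, hx⟩
        obtain ⟨h, hh, j, hsj⟩ := span3 s hs
        have hx2 : x = (v + j.val • r2) + h := by
          rw [hx, hsj, ← zsm j r2]
          module
        obtain ⟨l, hl, hEq⟩ := hRN δ hδG v j.val
        refine ⟨l, hl, ?_⟩
        rw [hx2, cent δ hδG _ h hh, hEq, hδv]
        abel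
      | succ c ih =>
        rintro x ⟨s, hs, hx⟩
        set x' : Pt p 4 := v + ((0 : Pt p 4) + c • r3) with hx'
        obtain ⟨l0, hl0, hEq0⟩ := ih x' ⟨0, hH30, rfl⟩
        -- commutation relation at x'
        have hcomx := congrArg (fun σ : Equiv.Perm (Pt p 4) => σ x') hcom23
        simp only [Equiv.Perm.mul_apply] at hcomx
        rw [hε, hη, hη, hε] at hcomx
        -- hcomx : r2 + δ (r3 + δ3 x') = r3 + δ3 (r2 + δ x')
        set z0 : Pt p 4 := r3 + δ3 x' with hz0
        obtain ⟨l1, hl1, hEq1⟩ := hR δ3 hδ3G x'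
        have hstep : δ3 (r2 + δ x') = δ3 x' + r2 + l1 + l0 := by
          have h8 : r2 + δ x' = (x' + r2) + l0 := by rw [hEq0]; abel
          rw [h8, cent δ3 hδ3G _ l0 (LH2 _ hl0), hEq1]
        have hδz0 : δ z0 = z0 + (l1 + l0) := by
          have h9 : r2 + δ z0 = r3 + (δ3 x' + r2 + l1 + l0) := by
            rw [hz0, ← hstep]
            exact hcomx
          have h10 : δ z0 = (r3 + (δ3 x' + r2 + l1 + l0)) - r2 := by rw [← h9]; abel
          rw [h10, hz0]
          abel
        -- z0 lies in fiber c+1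
        set F3 : Pt p 4 := δ3 x' - x' with hF3
        have hF3H : F3 ∈ H3s := F1 δ3 hδ3G hδ3v x'
        have hz0eq : z0 = v + (F3 + (c + 1) • r3) := by
          have h11 : δ3 x' = x' + F3 := by rw [hF3]; abel
          rw [hz0, h11, hx', succ_nsmul]
          module
        -- x and z0 differ by an element of H3s
        have hdiff : x - z0 = s - F3 := by
          rw [hx, hz0eq]
          module
        obtain ⟨h, hh, j, hsj⟩ := span3 (s - F3) (hH3sub s hs F3 hF3H)
        have hx2 : x = (z0 + j.val • r2) + h := by
          have h12 : x = z0 + (s - F3) := by rw [← hdiff]; abel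
          rw [h12, hsj, ← zsm j r2]
          module
        obtain ⟨l2, hl2, hEq2⟩ := hRN δ hδG z0 j.val
        refine ⟨l1 + l0 + l2, Ladd _ _ (Ladd _ _ hl1 hl0) hl2, ?_⟩
        rw [hx2, cent δ hδG _ h hh, hEq2, hδz0]
        abel
    -- every block displacement of δ lies on the line
    have key : ∀ x : Pt p 4, ∃ l, Lp l ∧ δ x = x + l := by
      intro x
      obtain ⟨h, hh, hx⟩ := dec1 x
      set J := jf x with hJ
      set C := fib x with hC
      apply hMC C.val x
      refine ⟨h + J • r2, hH3add _ (hH23 hh) _ (hH3smul J r2 hr2H3), ?_⟩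
      rw [hx, ← zsm C r3]
    -- build σ and derive the contradiction with hnofix
    obtain ⟨a, b, hab⟩ := span2 u huH2
    have hτ0 : τ 0 = tl r0 := Equiv.ext fun z => hr0 z
    have hτ1 : τ 1 = tl r1 := Equiv.ext fun z => hr1 z
    have hkey : tl u = τ 0 ^ a.val * τ 1 ^ b.val := by
      rw [hτ0, hτ1, tl_pow, tl_pow, tl_mul]
      congr 1
      rw [hab, zsm a r0, zsm b r1]
    have hmem : tl u ∈ Subgroup.closure {τ 0, τ 1} := by
      rw [hkey]
      exact mul_mem (pow_mem (Subgroup.subset_closure (by simp)) _)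
        (pow_mem (Subgroup.subset_closure (by simp)) _)
    have hne : tl u ≠ 1 := by
      intro h
      apply hune
      have := congrArg (fun σ : Equiv.Perm (Pt p 4) => σ 0) h
      simpa using this
    obtain ⟨w0, hw0⟩ := hnofix (tl u) hmem hne
    apply hw0
    apply Set.Subset.antisymm
    · rintro y ⟨x, ⟨k, hk⟩, rfl⟩
      obtain ⟨l, ⟨a0, rfl⟩, hEq⟩ := key x
      refine ⟨k + (a0.val : ℤ), ?_⟩
      rw [tl_zpow, tl_apply, hEq, ← hk, tl_zpow, tl_apply, add_zsmul, natCast_zsmul, ← zsm]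
      abel
    · intro y hy
      obtain ⟨k, hk⟩ := hy
      obtain ⟨l, ⟨a0, hl⟩, hEq⟩ := key (δ⁻¹ y)
      refine ⟨δ⁻¹ y, ⟨k - (a0.val : ℤ), ?_⟩, Equiv.Perm.apply_inv_self δ y⟩
      have h9 : y = δ⁻¹ y + a0 • u := by
        conv_lhs => rw [← Equiv.Perm.apply_inv_self δ y]
        rw [hEq, hl]
      have h10 : δ⁻¹ y = y - a0 • u := eq_sub_of_add_eq h9.symm
      rw [h10, tl_zpow, tl_apply, sub_zsmul, natCast_zsmul, ← zsm, ← hk, tl_zpow, tl_apply]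
      abel
end
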